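/- In the GLM setting, let θ̆ : ℝ → ℝ^d be a differentiable curve of stationary solutions, i.e. ∇A(θ̆(t)) = M(t; θ̆(t)) for all t ∈ ℝ, and suppose that for each t the matrix H(t) := ∇²A(θ̆(t)) + t·V(t; θ̆(t)) is invertible. Then the derivative of the solution with respect to the tilt is θ̆'(t) = −H(t)^{-1}·V(t; θ̆(t))·θ̆(t). -/

import Mathlib

open Real Finset

noncomputable def glmGamma {d N : ℕ} (T : Fin N → EuclideanSpace ℝ (Fin d)) (t : ℝ)
    (θ : EuclideanSpace ℝ (Fin d)) : ℝ :=
  Real.log ((1 / (N : ℝ)) * ∑ i, Real.exp (-t * (inner ℝ θ (T i) : ℝ)))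

noncomputable def glmM {d N : ℕ} (T : Fin N → EuclideanSpace ℝ (Fin d)) (t : ℝ)
    (θ : EuclideanSpace ℝ (Fin d)) : EuclideanSpace ℝ (Fin d) :=
  ∑ i, ((1 / (N : ℝ)) * Real.exp (-t * (inner ℝ θ (T i) : ℝ) - glmGamma T t θ)) • T i

noncomputable def glmV {d N : ℕ} (T : Fin N → EuclideanSpace ℝ (Fin d)) (t : ℝ)
    (θ : EuclideanSpace ℝ (Fin d)) :
    EuclideanSpace ℝ (Fin d) →L[ℝ] EuclideanSpace ℝ (Fin d) :=
  ∑ i, ((1 / (N : ℝ)) * Real.exp (-t * (inner ℝ θ (T i) : ℝ) - glmGamma T t θ)) •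
    ((innerSL ℝ (T i - glmM T t θ)).smulRight (T i - glmM T t θ))

lemma glm_weight_eq {d N : ℕ} (hN : 0 < N) (T : Fin N → EuclideanSpace ℝ (Fin d)) (t : ℝ)
    (θ : EuclideanSpace ℝ (Fin d)) (i : Fin N) :
    (1 / (N : ℝ)) * Real.exp (-t * (inner ℝ θ (T i) : ℝ) - glmGamma T t θ)
      = Real.exp (-t * (inner ℝ θ (T i) : ℝ)) / ∑ j, Real.exp (-t * (inner ℝ θ (T j) : ℝ)) := by
  have : Nonempty (Fin N) := Fin.pos_iff_nonempty.mp hN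
  have hs : 0 < ∑ j, Real.exp (-t * (inner ℝ θ (T j) : ℝ)) :=
    Finset.sum_pos (fun j _ => Real.exp_pos _) Finset.univ_nonempty
  have hNpos : (0 : ℝ) < N := by exact_mod_cast hN
  rw [glmGamma, Real.exp_sub, Real.exp_log (by positivity)]
  field_simp

lemma glmM_eq {d N : ℕ} (hN : 0 < N) (T : Fin N → EuclideanSpace ℝ (Fin d)) (t : ℝ)
    (θ : EuclideanSpace ℝ (Fin d)) :
    glmM T t θ = (∑ j, Real.exp (-t * (inner ℝ θ (T j) : ℝ)))⁻¹ •
      ∑ i, Real.exp (-t * (inner ℝ θ (T i) : ℝ)) • T i := by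
  rw [glmM, Finset.smul_sum]
  refine Finset.sum_congr rfl fun i _ => ?_
  rw [glm_weight_eq hN, smul_smul, div_eq_inv_mul]

lemma glmV_apply {d N : ℕ} (hN : 0 < N) (T : Fin N → EuclideanSpace ℝ (Fin d)) (t : ℝ)
    (θ x : EuclideanSpace ℝ (Fin d)) :
    glmV T t θ x = ∑ i,
      ((Real.exp (-t * (inner ℝ θ (T i) : ℝ)) / ∑ j, Real.exp (-t * (inner ℝ θ (T j) : ℝ))) *
        (inner ℝ (T i - glmM T t θ) x : ℝ)) • (T i - glmM T t θ) := by
  rw [glmV, ContinuousLinearMap.sum_apply]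
  refine Finset.sum_congr rfl fun i _ => ?_
  rw [glm_weight_eq hN]
  rw [ContinuousLinearMap.smul_apply, ContinuousLinearMap.smulRight_apply, innerSL_apply_apply,
    smul_smul]

theorem glm_solution_tilt_derivative {d N : ℕ} (hN : 0 < N)
    (T : Fin N → EuclideanSpace ℝ (Fin d))
    (A : EuclideanSpace ℝ (Fin d) → ℝ) (hA : ContDiff ℝ 2 A)
    (θbreve : ℝ → EuclideanSpace ℝ (Fin d)) (hθ : Differentiable ℝ θbreve)
    (hstat : ∀ t : ℝ, gradient A (θbreve t) = glmM T t (θbreve t))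
    (H Hinv : ℝ → EuclideanSpace ℝ (Fin d) →L[ℝ] EuclideanSpace ℝ (Fin d))
    (hH : ∀ t : ℝ, H t = fderiv ℝ (gradient A) (θbreve t) + t • glmV T t (θbreve t))
    (hHinv : ∀ t : ℝ,
      (H t).comp (Hinv t) = ContinuousLinearMap.id ℝ (EuclideanSpace ℝ (Fin d)) ∧
      (Hinv t).comp (H t) = ContinuousLinearMap.id ℝ (EuclideanSpace ℝ (Fin d)))
    (t : ℝ) :
    deriv θbreve t = -(Hinv t (glmV T t (θbreve t) (θbreve t))) := by
  classical
  have hne : Nonempty (Fin N) := Fin.pos_iff_nonempty.mp hN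
  set θ' : EuclideanSpace ℝ (Fin d) := deriv θbreve t with hθ'def
  have hθt : HasDerivAt θbreve θ' t := (hθ t).hasDerivAt
  -- derivatives of the inner products along the curve
  have hc : ∀ i : Fin N, HasDerivAt (fun s => (inner ℝ (θbreve s) (T i) : ℝ))
      ((inner ℝ θ' (T i) : ℝ)) t := by
    intro i
    have h := ((innerSL ℝ (T i)).hasFDerivAt (x := θbreve t)).comp_hasDerivAt t hθt
    simpa only [Function.comp_def, innerSL_apply_apply, real_inner_comm] using h
  set a : Fin N → ℝ := fun i => Real.exp (-t * (inner ℝ (θbreve t) (T i) : ℝ)) with ha_def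
  set b : Fin N → ℝ := fun i =>
    (inner ℝ (θbreve t) (T i) : ℝ) + t * (inner ℝ θ' (T i) : ℝ) with hb_def
  have hae : ∀ i : Fin N, HasDerivAt (fun s => Real.exp (-s * (inner ℝ (θbreve s) (T i) : ℝ)))
      (-(b i) * a i) t := by
    intro i
    have h1 : HasDerivAt (fun s : ℝ => -s * (inner ℝ (θbreve s) (T i) : ℝ)) (-(b i)) t := by
      have h := ((hasDerivAt_id t).fun_neg).fun_mul (hc i)
      refine h.congr_deriv ?_
      simp only [hb_def, id_eq]; ring
    have h2 := h1.exp
    convert h2 using 1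
    simp only [ha_def]; ring
  set S : ℝ → ℝ := fun s => ∑ i, Real.exp (-s * (inner ℝ (θbreve s) (T i) : ℝ)) with hS_def
  set U : ℝ → EuclideanSpace ℝ (Fin d) :=
    fun s => ∑ i, Real.exp (-s * (inner ℝ (θbreve s) (T i) : ℝ)) • T i with hU_def
  have hSd : HasDerivAt S (∑ i, -(b i) * a i) t := HasDerivAt.fun_sum fun i _ => hae i
  have hUd : HasDerivAt U (∑ i, (-(b i) * a i) • T i) t :=
    HasDerivAt.fun_sum fun i _ => (hae i).smul_const (T i)
  have hSpos : 0 < S t :=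
    Finset.sum_pos (fun i _ => Real.exp_pos _) Finset.univ_nonempty
  have hS0 : S t ≠ 0 := ne_of_gt hSpos
  have hSinv : HasDerivAt (fun s => (S s)⁻¹) (-(∑ i, -(b i) * a i) / (S t) ^ 2) t :=
    hSd.inv hS0
  have hmd : HasDerivAt (fun s => (S s)⁻¹ • U s)
      ((S t)⁻¹ • (∑ i, (-(b i) * a i) • T i) + (-(∑ i, -(b i) * a i) / (S t) ^ 2) • U t) t :=
    hSinv.smul hUd
  -- derivative of the left-hand side
  have hgradC : ContDiff ℝ 1 (gradient A) := by
    have h1 : ContDiff ℝ 1 (fderiv ℝ A) := hA.fderiv_right (by norm_num)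
    have h2 : gradient A = fun x => (InnerProductSpace.toDual ℝ _).symm (fderiv ℝ A x) := rfl
    rw [h2]
    exact (InnerProductSpace.toDual ℝ _).symm.contDiff.comp h1
  have hgd : DifferentiableAt ℝ (gradient A) (θbreve t) :=
    (hgradC.differentiable (by norm_num)) _
  have hLHS : HasDerivAt (fun s => gradient A (θbreve s))
      (fderiv ℝ (gradient A) (θbreve t) θ') t :=
    hgd.hasFDerivAt.comp_hasDerivAt t hθt
  have hfun : (fun s => gradient A (θbreve s)) = fun s => (S s)⁻¹ • U s := by
    funext s
    rw [hstat s, glmM_eq hN]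
  rw [hfun] at hLHS
  have hkey : fderiv ℝ (gradient A) (θbreve t) θ'
      = (S t)⁻¹ • (∑ i, (-(b i) * a i) • T i) + (-(∑ i, -(b i) * a i) / (S t) ^ 2) • U t :=
    hLHS.unique hmd
  -- the algebraic identity: this equals -V(θ + t θ')
  set m := glmM T t (θbreve t) with hm_def
  set ψ := θbreve t + t • θ' with hψ_def
  set μ : ℝ := (inner ℝ (m : EuclideanSpace ℝ (Fin d)) ψ : ℝ) with hμ_def
  have hm_eq : m = (S t)⁻¹ • U t := glmM_eq hN T t (θbreve t)
  have hb_inner : ∀ i, (inner ℝ (T i) ψ : ℝ) = b i := by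
    intro i
    simp only [hψ_def, hb_def, inner_add_right, real_inner_smul_right]
    rw [real_inner_comm (T i) (θbreve t), real_inner_comm (T i) θ']
  have hVψ : glmV T t (θbreve t) ψ
      = ∑ i, ((a i / S t) * (b i - μ)) • (T i - m) := by
    rw [glmV_apply hN]
    refine Finset.sum_congr rfl fun i _ => ?_
    rw [inner_sub_left, hb_inner i]
  have hUa : U t = ∑ i, a i • T i := rfl
  have hSa : S t = ∑ i, a i := rfl
  have h3 : ∑ i, ((a i / S t) * (b i - μ)) • (T i - m)
      = (S t)⁻¹ • (∑ i, (a i * b i) • T i) - (μ / S t) • U t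
        - ((∑ i, a i * b i) / S t - μ) • m := by
    have hscal : ∑ i, (a i / S t) * (b i - μ) = (∑ i, a i * b i) / S t - μ := by
      have : ∀ i ∈ Finset.univ, (a i / S t) * (b i - μ)
          = (a i * b i) * (S t)⁻¹ - a i * (μ * (S t)⁻¹) := fun i _ => by ring
      rw [Finset.sum_congr rfl this, Finset.sum_sub_distrib, ← Finset.sum_mul, ← Finset.sum_mul,
        ← hSa]
      field_simp
    have hterm : ∀ i ∈ Finset.univ, ((a i / S t) * (b i - μ)) • (T i - m)
        = ((S t)⁻¹ • ((a i * b i) • T i) - ((μ / S t) • (a i • T i)))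
          - ((a i / S t) * (b i - μ)) • m := by
      intro i _
      rw [smul_sub, smul_smul, smul_smul]
      congr 2
      rw [← sub_smul]
      congr 1
      ring
    rw [Finset.sum_congr rfl hterm, Finset.sum_sub_distrib, Finset.sum_sub_distrib,
      ← Finset.smul_sum, ← Finset.smul_sum, ← Finset.sum_smul, hscal, hUa]
  have hRHS : (S t)⁻¹ • (∑ i, (-(b i) * a i) • T i) + (-(∑ i, -(b i) * a i) / (S t) ^ 2) • U t
      = -(glmV T t (θbreve t) ψ) := by
    rw [hVψ, h3, hm_eq]
    have h1 : ∑ i, -(b i) * a i = -(∑ i, a i * b i) := by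
      rw [← Finset.sum_neg_distrib]
      exact Finset.sum_congr rfl fun i _ => by ring
    have h2 : ∑ i, (-(b i) * a i) • T i = (-1 : ℝ) • ∑ i, (a i * b i) • T i := by
      rw [Finset.smul_sum]
      refine Finset.sum_congr rfl fun i _ => ?_
      rw [smul_smul]
      congr 1
      ring
    rw [h1, h2]
    set W := ∑ i, (a i * b i) • T i
    set c := ∑ i, a i * b i
    module
  -- put it together
  have hVadd : glmV T t (θbreve t) ψ
      = glmV T t (θbreve t) (θbreve t) + t • glmV T t (θbreve t) θ' := by
    rw [hψ_def, map_add, map_smul]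
  have hHθ' : H t θ' = -(glmV T t (θbreve t) (θbreve t)) := by
    rw [hH t, ContinuousLinearMap.add_apply, ContinuousLinearMap.smul_apply, hkey, hRHS, hVadd]
    abel
  have hid := congrArg (fun L : EuclideanSpace ℝ (Fin d) →L[ℝ] EuclideanSpace ℝ (Fin d) => L θ')
    (hHinv t).2
  simp only [ContinuousLinearMap.comp_apply, ContinuousLinearMap.id_apply] at hid
  rw [← hid, hHθ', map_neg]
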